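/- arXiv:1304.6255 — 12 statements merged into one kernel-verified Lean document; each statement's English description precedes it below -/
import Mathlib

section
/- A vertex set D is an efficient dominating set of a finite simple graph G if and only if D is a maximum weight independent set in the square G² (with vertex weights ω(v) = |N[v]|) whose total weight equals |V(G)|. -/
open SimpleGraph Finset

/-- `D` is an efficient dominating set: every vertex is in the closed
neighborhood of exactly one vertex of `D`. -/
def IsEffDomSet {V : Type*} (G : SimpleGraph V) (D : Set V) : Prop :=
  ∀ u : V, ∃! d : V, d ∈ D ∧ (d = u ∨ G.Adj d u)

/-- The square of a graph: distinct vertices at distance 1 or 2 are adjacent. -/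
def SimpleGraph.square {V : Type*} (G : SimpleGraph V) : SimpleGraph V where
  Adj u v := u ≠ v ∧ (G.Adj u v ∨ ∃ w, G.Adj u w ∧ G.Adj w v)
  symm := by
    constructor
    rintro u v ⟨h, h' | ⟨w, hw1, hw2⟩⟩
    · exact ⟨h.symm, Or.inl h'.symm⟩
    · exact ⟨h.symm, Or.inr ⟨w, hw2.symm, hw1.symm⟩⟩
  loopless := by constructor; rintro u ⟨h, -⟩; exact h rfl

/-- `S` is an independent set of `G`. -/
def IsIndepSet' {V : Type*} (G : SimpleGraph V) (S : Set V) : Prop :=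
  ∀ a ∈ S, ∀ b ∈ S, ¬ G.Adj a b

section Aux

variable {V : Type*} [Fintype V] [DecidableEq V]

/-- closed neighborhood as a finset -/
private def cn (G : SimpleGraph V) [DecidableRel G.Adj] (v : V) : Finset V :=
  insert v (G.neighborFinset v)

private lemma mem_cn {G : SimpleGraph V} [DecidableRel G.Adj] {u v : V} :
    u ∈ cn G v ↔ (v = u ∨ G.Adj v u) := by
  simp [cn, SimpleGraph.mem_neighborFinset, eq_comm, adj_comm]

private lemma card_cn (G : SimpleGraph V) [DecidableRel G.Adj] (v : V) :
    (cn G v).card = G.degree v + 1 := by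
  rw [cn, Finset.card_insert_of_notMem (G.notMem_neighborFinset_self v)]
  rfl

private lemma square_adj_of_common {G : SimpleGraph V} {a b u : V} (hab : a ≠ b)
    (ha : a = u ∨ G.Adj a u) (hb : b = u ∨ G.Adj b u) : G.square.Adj a b := by
  refine ⟨hab, ?_⟩
  rcases ha with rfl | ha <;> rcases hb with rfl | hb
  · exact absurd rfl hab
  · exact Or.inl hb.symm
  · exact Or.inl ha
  · exact Or.inr ⟨u, ha, hb.symm⟩

private lemma cn_disjoint {G : SimpleGraph V} [DecidableRel G.Adj] {S : Set V}
    (h : IsIndepSet' G.square S) {a b : V} (ha : a ∈ S) (hb : b ∈ S) (hab : a ≠ b) :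
    Disjoint (cn G a) (cn G b) := by
  rw [Finset.disjoint_left]
  intro u hua hub
  exact h a ha b hb (square_adj_of_common hab (mem_cn.1 hua) (mem_cn.1 hub))

private lemma sum_eq_card_biUnion {G : SimpleGraph V} [DecidableRel G.Adj] {I : Finset V}
    (h : IsIndepSet' G.square (I : Set V)) :
    ∑ v ∈ I, (G.degree v + 1) = (I.biUnion (cn G)).card := by
  rw [Finset.card_biUnion (fun a ha b hb hab =>
    cn_disjoint h (Finset.mem_coe.2 ha) (Finset.mem_coe.2 hb) hab)]
  simp [card_cn]

end Aux

theorem stmt0 {V : Type*} [Fintype V] [DecidableEq V] (G : SimpleGraph V)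
    [DecidableRel G.Adj] (D : Finset V) :
    IsEffDomSet G (D : Set V) ↔
      (IsIndepSet' G.square (D : Set V) ∧
       (∀ I : Finset V, IsIndepSet' G.square (I : Set V) →
         ∑ v ∈ I, (G.degree v + 1) ≤ ∑ v ∈ D, (G.degree v + 1)) ∧
       ∑ v ∈ D, (G.degree v + 1) = Fintype.card V) := by
  constructor
  · intro h
    have hind : IsIndepSet' G.square (D : Set V) := by
      intro a ha b hb hadj
      obtain ⟨hne, hor⟩ := hadj
      rcases hor with hab | ⟨w, h1, h2⟩
      · obtain ⟨d, -, hd⟩ := h b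
        exact hne ((hd a ⟨ha, Or.inr hab⟩).trans (hd b ⟨hb, Or.inl rfl⟩).symm)
      · obtain ⟨d, -, hd⟩ := h w
        exact hne ((hd a ⟨ha, Or.inr h1⟩).trans (hd b ⟨hb, Or.inr h2.symm⟩).symm)
    have hcover : D.biUnion (cn G) = Finset.univ := by
      apply Finset.eq_univ_of_forall
      intro u
      obtain ⟨d, ⟨hdD, hdu⟩, -⟩ := h u
      exact Finset.mem_biUnion.2 ⟨d, hdD, mem_cn.2 hdu⟩
    have hsum : ∑ v ∈ D, (G.degree v + 1) = Fintype.card V := by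
      rw [sum_eq_card_biUnion hind, hcover, Finset.card_univ]
    refine ⟨hind, fun I hI => ?_, hsum⟩
    rw [hsum, sum_eq_card_biUnion hI]
    exact Finset.card_le_univ _
  · rintro ⟨hind, -, hsum⟩
    have hcover : D.biUnion (cn G) = Finset.univ := by
      apply Finset.eq_univ_of_card
      rw [← sum_eq_card_biUnion hind, hsum]
    intro u
    have hu : u ∈ D.biUnion (cn G) := hcover ▸ Finset.mem_univ u
    obtain ⟨d, hdD, hdu⟩ := Finset.mem_biUnion.1 hu
    refine ⟨d, ⟨hdD, mem_cn.1 hdu⟩, ?_⟩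
    rintro y ⟨hyD, hyu⟩
    by_contra hne
    exact Finset.disjoint_left.1
      (cn_disjoint hind (Finset.mem_coe.2 hyD) (Finset.mem_coe.2 hdD) hne)
      (mem_cn.2 hyu) hdu
end

section
/- A vertex set D is an efficient dominating set of a finite simple graph G if and only if D is a dominating set of G with Σ_{d∈D} |N[d]| = |V(G)| that has minimum total weight among all dominating sets of G with respect to the weight function ω(v) = |N[v]|. -/
open SimpleGraph Finset

/-- `D` is a dominating set: every vertex is in the closed neighborhood of
some vertex of `D`. -/
def IsDomSet {V : Type*} (G : SimpleGraph V) (D : Set V) : Prop :=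
  ∀ u : V, ∃ d ∈ D, d = u ∨ G.Adj d u

private lemma sum_count {V : Type*} [Fintype V] [DecidableEq V] (G : SimpleGraph V)
    [DecidableRel G.Adj] (D : Finset V) :
    ∑ v ∈ D, (G.degree v + 1) =
      ∑ u : V, (D.filter (fun d => d = u ∨ G.Adj d u)).card := by
  have h1 : ∀ d : V, G.degree d + 1 =
      (Finset.univ.filter (fun u => d = u ∨ G.Adj d u)).card := by
    intro d
    have : Finset.univ.filter (fun u => d = u ∨ G.Adj d u)
        = insert d (G.neighborFinset d) := by
      ext u
      simp [eq_comm, adj_comm]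
    rw [this, Finset.card_insert_of_notMem (by simp)]
    simp [G.card_neighborFinset_eq_degree]
  calc ∑ v ∈ D, (G.degree v + 1)
      = ∑ d ∈ D, ∑ u : V, (if d = u ∨ G.Adj d u then 1 else 0) := by
        refine Finset.sum_congr rfl fun d _ => ?_
        rw [h1 d, Finset.card_filter]
    _ = ∑ u : V, ∑ d ∈ D, (if d = u ∨ G.Adj d u then 1 else 0) :=
        Finset.sum_comm
    _ = ∑ u : V, (D.filter (fun d => d = u ∨ G.Adj d u)).card := by
        refine Finset.sum_congr rfl fun u _ => ?_
        rw [Finset.card_filter]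

private lemma dom_count {V : Type*} [Fintype V] [DecidableEq V] (G : SimpleGraph V)
    [DecidableRel G.Adj] {D : Finset V} (h : IsDomSet G (D : Set V)) (u : V) :
    1 ≤ (D.filter (fun d => d = u ∨ G.Adj d u)).card := by
  obtain ⟨d, hd, hcov⟩ := h u
  exact Finset.card_pos.mpr ⟨d, Finset.mem_filter.mpr ⟨hd, hcov⟩⟩

private lemma eff_iff_count {V : Type*} [Fintype V] [DecidableEq V] (G : SimpleGraph V)
    [DecidableRel G.Adj] (D : Finset V) :
    IsEffDomSet G (D : Set V) ↔
      ∀ u : V, (D.filter (fun d => d = u ∨ G.Adj d u)).card = 1 := by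
  constructor
  · intro h u
    obtain ⟨d, ⟨hd, hcov⟩, huniq⟩ := h u
    rw [Finset.card_eq_one]
    refine ⟨d, ?_⟩
    ext e
    simp only [Finset.mem_filter, Finset.mem_singleton]
    constructor
    · rintro ⟨he, hc⟩
      exact huniq e ⟨he, hc⟩
    · rintro rfl
      exact ⟨hd, hcov⟩
  · intro h u
    obtain ⟨d, hd⟩ := Finset.card_eq_one.mp (h u)
    have hdm : d ∈ D.filter (fun d => d = u ∨ G.Adj d u) := by
      rw [hd]; exact Finset.mem_singleton_self d
    rw [Finset.mem_filter] at hdm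
    refine ⟨d, ⟨hdm.1, hdm.2⟩, ?_⟩
    intro e ⟨he, hc⟩
    have : e ∈ D.filter (fun d => d = u ∨ G.Adj d u) :=
      Finset.mem_filter.mpr ⟨he, hc⟩
    rw [hd, Finset.mem_singleton] at this
    exact this

theorem stmt1 {V : Type*} [Fintype V] [DecidableEq V] (G : SimpleGraph V)
    [DecidableRel G.Adj] (D : Finset V) :
    IsEffDomSet G (D : Set V) ↔
      (IsDomSet G (D : Set V) ∧
       ∑ v ∈ D, (G.degree v + 1) = Fintype.card V ∧
       (∀ D' : Finset V, IsDomSet G (D' : Set V) →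
         ∑ v ∈ D, (G.degree v + 1) ≤ ∑ v ∈ D', (G.degree v + 1))) := by
  constructor
  · intro h
    have hc := (eff_iff_count G D).mp h
    have hdom : IsDomSet G (D : Set V) := fun u => by
      obtain ⟨d, ⟨hd, hcov⟩, _⟩ := h u
      exact ⟨d, hd, hcov⟩
    have hsum : ∑ v ∈ D, (G.degree v + 1) = Fintype.card V := by
      rw [sum_count]
      simp [hc]
    refine ⟨hdom, hsum, fun D' hD' => ?_⟩
    rw [hsum, sum_count]
    calc Fintype.card V = ∑ _u : V, 1 := by
          rw [← Finset.card_univ, Finset.card_eq_sum_ones]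
      _ ≤ ∑ u : V, (D'.filter (fun d => d = u ∨ G.Adj d u)).card :=
        Finset.sum_le_sum fun u _ => dom_count G hD' u
  · rintro ⟨hdom, hsum, _⟩
    rw [eff_iff_count]
    rw [sum_count] at hsum
    have hcard : (∑ _u : V, 1) = Fintype.card V := by
      rw [← Finset.card_univ, Finset.card_eq_sum_ones]
    have := (Finset.sum_eq_sum_iff_of_le
      (fun u (_ : u ∈ Finset.univ) => dom_count G hdom u)).mp
      (by rw [hsum, hcard])
    intro u
    exact (this u (Finset.mem_univ u)).symm
end

section
/- If G is a connected graph with an efficient dominating set D, and H is a homogeneous set of G, then |H ∩ D| ≤ 1. -/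
open SimpleGraph

/-- `H` is a homogeneous set: `2 ≤ |H|`, `H ≠ V`, and every vertex outside `H`
is adjacent to all of `H` or to none of `H`. -/
def IsHomogeneousSet {V : Type*} (G : SimpleGraph V) (H : Set V) : Prop :=
  H.Nontrivial ∧ H ≠ Set.univ ∧
    ∀ v ∉ H, (∀ h ∈ H, G.Adj v h) ∨ (∀ h ∈ H, ¬ G.Adj v h)

lemma cross_edge {V : Type*} (G : SimpleGraph V) (H : Set V) {a b : V}
    (p : G.Walk a b) (ha : a ∈ H) (hb : b ∉ H) :
    ∃ x ∈ H, ∃ y, y ∉ H ∧ G.Adj x y := by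
  induction p with
  | nil => exact absurd ha hb
  | @cons u v w huv q ih =>
    by_cases hv : v ∈ H
    · exact ih hv hb
    · exact ⟨u, ha, v, hv, huv⟩

theorem stmt2 {V : Type*} [Fintype V] (G : SimpleGraph V) (hG : G.Connected)
    (D H : Set V) (hD : IsEffDomSet G D) (hH : IsHomogeneousSet G H) :
    (H ∩ D).Subsingleton := by
  intro d1 hd1 d2 hd2
  by_contra hne
  obtain ⟨hHnt, hHne, hhom⟩ := hH
  obtain ⟨b, hb⟩ : ∃ b, b ∉ H := by
    by_contra h
    push_neg at h
    exact hHne (Set.eq_univ_of_forall h)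
  obtain ⟨x, hx, y, hy, hxy⟩ :=
    cross_edge G H ((hG.preconnected d1 b).some) hd1.1 hb
  have hyall : ∀ h ∈ H, G.Adj y h := by
    rcases hhom y hy with h | h
    · exact h
    · exact absurd hxy.symm (h x hx)
  obtain ⟨d, _, huniq⟩ := hD y
  have e1 : d1 = d := huniq d1 ⟨hd1.2, Or.inr (hyall d1 hd1.1).symm⟩
  have e2 : d2 = d := huniq d2 ⟨hd2.2, Or.inr (hyall d2 hd2.1).symm⟩
  exact hne (e1.trans e2.symm)
end

section
/- If G is a connected 2P₂-free graph with connected complement that has an efficient dominating set D, then no vertex of D belongs to any homogeneous set of G. -/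
open SimpleGraph

/-- `2P₂`: the disjoint union of two edges. -/
def twoP2 : SimpleGraph (Fin 4) := SimpleGraph.fromEdgeSet {s(0, 1), s(2, 3)}

lemma myClosure {V : Type*} {G : SimpleGraph V} {S : Set V}
    (hS : ∀ a ∈ S, ∀ b, G.Adj a b → b ∈ S) :
    ∀ {a b : V}, a ∈ S → G.Reachable a b → b ∈ S := by
  intro a b ha h
  obtain ⟨w⟩ := h
  induction w with
  | nil => exact ha
  | cons hadj p ih => exact ih (hS _ ha _ hadj)

lemma buildEmb {V : Type*} (G : SimpleGraph V) (h₁ h₂ m₁ m₂ : V)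
    (ha : G.Adj h₁ h₂) (hb : G.Adj m₁ m₂)
    (n11 : ¬G.Adj h₁ m₁) (n12 : ¬G.Adj h₁ m₂) (n21 : ¬G.Adj h₂ m₁) (n22 : ¬G.Adj h₂ m₂)
    (d11 : h₁ ≠ m₁) (d12 : h₁ ≠ m₂) (d21 : h₂ ≠ m₁) (d22 : h₂ ≠ m₂) :
    Nonempty (twoP2 ↪g G) := by
  have ha' : G.Adj h₂ h₁ := ha.symm
  have hb' : G.Adj m₂ m₁ := hb.symm
  have n11' : ¬G.Adj m₁ h₁ := fun h => n11 h.symm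
  have n12' : ¬G.Adj m₂ h₁ := fun h => n12 h.symm
  have n21' : ¬G.Adj m₁ h₂ := fun h => n21 h.symm
  have n22' : ¬G.Adj m₂ h₂ := fun h => n22 h.symm
  have i1 : ¬G.Adj h₁ h₁ := G.irrefl
  have i2 : ¬G.Adj h₂ h₂ := G.irrefl
  have i3 : ¬G.Adj m₁ m₁ := G.irrefl
  have i4 : ¬G.Adj m₂ m₂ := G.irrefl
  refine ⟨⟨⟨![h₁, h₂, m₁, m₂], ?_⟩, ?_⟩⟩
  · intro i j hij
    fin_cases i <;> fin_cases j <;> simp_all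
  · intro i j
    fin_cases i <;> fin_cases j <;>
      simp [twoP2, fromEdgeSet_adj, ha, hb, ha', hb', n11, n12, n21, n22,
        n11', n12', n21', n22', i1, i2, i3, i4] <;> assumption

theorem stmt3 {V : Type*} [Fintype V] (G : SimpleGraph V)
    (hG : G.Connected) (hGc : Gᶜ.Connected)
    (hfree : IsEmpty (twoP2 ↪g G))
    (D : Set V) (hD : IsEffDomSet G D) :
    ∀ d ∈ D, ∀ H : Set V, IsHomogeneousSet G H → d ∉ H := by
  intro d hd H hHom hdH
  obtain ⟨hnt, hne, hhom⟩ := hHom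
  -- uniqueness of dominators
  have huniq : ∀ u e₁ e₂, e₁ ∈ D → e₂ ∈ D → (e₁ = u ∨ G.Adj e₁ u) →
      (e₂ = u ∨ G.Adj e₂ u) → e₁ = e₂ := by
    intro u e₁ e₂ h1 h2 c1 c2
    obtain ⟨x, _, hu⟩ := hD u
    rw [hu e₁ ⟨h1, c1⟩, hu e₂ ⟨h2, c2⟩]
  -- no member of D is adjacent to d
  have hnoadj : ∀ e ∈ D, ¬ G.Adj e d := by
    intro e he ha
    have h1 : e = d := huniq d e d he hd (Or.inr ha) (Or.inl rfl)
    subst h1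
    exact G.irrefl ha
  -- a vertex outside H
  obtain ⟨v₀, hv₀⟩ : ∃ v, v ∉ H := by
    by_contra hc
    push_neg at hc
    exact hne (Set.eq_univ_iff_forall.mpr hc)
  -- Step 1: an edge inside H
  obtain ⟨h₁, h₂, hh₁, hh₂, hHadj⟩ : ∃ a b, a ∈ H ∧ b ∈ H ∧ G.Adj a b := by
    obtain ⟨x, hxH, hxd⟩ := hnt.exists_ne d
    obtain ⟨e, ⟨heD, hec⟩, -⟩ := hD x
    have heH : e ∈ H := by
      by_contra heH
      have hne' : e ≠ x := fun h => heH (h ▸ hxH)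
      have hadj : G.Adj e x := hec.resolve_left hne'
      rcases hhom e heH with hfull | hempty
      · exact hnoadj e heD (hfull d hdH)
      · exact hempty x hxH hadj
    by_cases hex : e = x
    · -- x ∈ D; then every outside vertex is empty, contradicting connectivity of G
      subst hex
      exfalso
      have hempty_all : ∀ v ∉ H, ∀ h ∈ H, ¬ G.Adj v h := by
        intro v hv
        rcases hhom v hv with hfull | hempt
        · exact absurd (huniq v e d heD hd (Or.inr (hfull e heH).symm)
            (Or.inr (hfull d hdH).symm)) hxd
        · exact hempt
      have : v₀ ∈ H := myClosure
        (fun a ha b hab => by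
          by_contra hb
          exact hempty_all b hb a ha hab.symm)
        hdH (hG.preconnected d v₀)
      exact hv₀ this
    · exact ⟨e, x, heH, hxH, hec.resolve_left hex⟩
  -- Step 2: M is nonempty
  obtain ⟨m, hmH, hmE⟩ : ∃ m, m ∉ H ∧ ∀ h ∈ H, ¬ G.Adj m h := by
    by_contra hc
    push_neg at hc
    have hfull : ∀ v ∉ H, ∀ h ∈ H, G.Adj v h := by
      intro v hv
      rcases hhom v hv with hf | he
      · exact hf
      · obtain ⟨h, hh, ha⟩ := hc v hv
        exact absurd ha (he h hh)
    have : v₀ ∈ H := myClosure (G := Gᶜ)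
      (fun a ha b hab => by
        by_contra hb
        exact hab.2 ((hfull b hb a ha).symm))
      hdH (hGc.preconnected d v₀)
    exact hv₀ this
  -- Step 3: an edge inside M (both endpoints empty towards H)
  obtain ⟨m₁, m₂, hm₁E, hm₂E, hm₁H, hm₂H, hmadj⟩ :
      ∃ a b, (∀ h ∈ H, ¬ G.Adj a h) ∧ (∀ h ∈ H, ¬ G.Adj b h) ∧ a ∉ H ∧ b ∉ H ∧ G.Adj a b := by
    obtain ⟨e, ⟨heD, hec⟩, -⟩ := hD m
    have heH : e ∉ H := by
      intro heH
      rcases hec with rfl | hadj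
      · exact hmH heH
      · exact hmE e heH hadj.symm
    have heE : ∀ h ∈ H, ¬ G.Adj e h :=
      (hhom e heH).resolve_left (fun hf => hnoadj e heD (hf d hdH))
    by_cases hem : e = m
    · subst hem
      -- find a neighbor of e via a walk to d
      obtain ⟨w⟩ := hG.preconnected e d
      cases w with
      | nil => exact absurd hdH heH
      | @cons _ u _ hadj p =>
        have huH : u ∉ H := fun hu => heE u hu hadj
        rcases hhom u huH with hf | hE
        · exfalso
          have : d = e := huniq u d e hd heD (Or.inr (hf d hdH).symm) (Or.inr hadj)
          exact heH (this ▸ hdH)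
        · exact ⟨e, u, heE, hE, heH, huH, hadj⟩
    · exact ⟨e, m, heE, hmE, heH, hmH, hec.resolve_left hem⟩
  -- Step 4: build the 2P₂
  exact hfree.false (Classical.choice (buildEmb G h₁ h₂ m₁ m₂ hHadj hmadj
    (fun h => hm₁E h₁ hh₁ h.symm) (fun h => hm₂E h₁ hh₁ h.symm)
    (fun h => hm₁E h₂ hh₂ h.symm) (fun h => hm₂E h₂ hh₂ h.symm)
    (fun h => hm₁H (h ▸ hh₁)) (fun h => hm₂H (h ▸ hh₁))
    (fun h => hm₁H (h ▸ hh₂)) (fun h => hm₂H (h ▸ hh₂))))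
end

section
/- If G is a connected 2P₂-free graph with connected complement that has an efficient dominating set D, then for every d ∈ D with |N(d)| ≥ 2, the open neighborhood N(d) is a homogeneous set of G. -/
open SimpleGraph

theorem stmt4 {V : Type*} [Fintype V] (G : SimpleGraph V)
    (hG : G.Connected) (hGc : Gᶜ.Connected)
    (hfree : IsEmpty (twoP2 ↪g G))
    (D : Set V) (hD : IsEffDomSet G D) :
    ∀ d ∈ D, 2 ≤ (G.neighborSet d).ncard → IsHomogeneousSet G (G.neighborSet d) := by
  intro d hdD hcard
  have hnt : (G.neighborSet d).Nontrivial := by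
    obtain ⟨a, ha, b, hb, hab⟩ := (Set.one_lt_ncard (s := G.neighborSet d) (Set.toFinite _)).mp (by omega)
    exact ⟨a, ha, b, hb, hab⟩
  refine ⟨hnt, ?_, ?_⟩
  · intro h
    have : d ∈ G.neighborSet d := by rw [h]; trivial
    exact G.irrefl this
  · intro v hv
    by_contra hcon
    push_neg at hcon
    obtain ⟨⟨h2, hh2, hvh2⟩, h1, hh1, hvh1⟩ := hcon
    simp only [SimpleGraph.mem_neighborSet] at hh1 hh2 hv
    have hvd : v ≠ d := by rintro rfl; exact hvh2 hh2
    obtain ⟨d', ⟨hd'D, hd'v⟩, -⟩ := hD v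
    have hd'd : d' ≠ d := by
      rintro rfl
      rcases hd'v with rfl | h
      · exact hvd rfl
      · exact hv h
    rcases hd'v with rfl | hadj
    · exact hvd (ExistsUnique.unique (hD h1) ⟨hd'D, Or.inr hvh1⟩ ⟨hdD, Or.inr hh1⟩)
    · have nAd'd : ¬ G.Adj d' d := fun a =>
        hd'd (ExistsUnique.unique (hD d) ⟨hd'D, Or.inr a⟩ ⟨hdD, Or.inl rfl⟩)
      have hd'h2 : ¬ (d' = h2 ∨ G.Adj d' h2) := fun a =>
        hd'd (ExistsUnique.unique (hD h2) ⟨hd'D, a⟩ ⟨hdD, Or.inr hh2⟩)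
      push_neg at hd'h2
      obtain ⟨hd'h2e, hd'h2a⟩ := hd'h2
      have hvh2e : v ≠ h2 := by rintro rfl; exact hv hh2
      have hd'v : d' ≠ v := G.ne_of_adj hadj
      have hdh2 : d ≠ h2 := G.ne_of_adj hh2
      have key : twoP2 ↪g G := by
        refine ⟨⟨![d', v, d, h2], ?_⟩, ?_⟩
        · intro a b hab
          fin_cases a <;> fin_cases b <;> simp_all <;>
            first
            | rfl
            | exact absurd hab.symm (by assumption)
        · intro a b
          fin_cases a <;> fin_cases b <;>
            simp [twoP2, SimpleGraph.fromEdgeSet_adj, Sym2.eq, Sym2.rel_iff',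
              Set.mem_insert_iff, Set.mem_singleton_iff] <;>
            first
            | exact hadj
            | exact hadj.symm
            | exact hh2
            | exact hh2.symm
            | exact G.irrefl
            | (intro h; first
                | exact nAd'd h
                | exact nAd'd h.symm
                | exact hd'h2a h
                | exact hd'h2a h.symm
                | exact hv h
                | exact hv h.symm
                | exact hvh2 h
                | exact hvh2 h.symm)
      exact hfree.elim key
end

section
/- In a P₅-free graph G, no midpoint of an induced P₄ belongs to any efficient dominating set of G: if vertices a,b,c,d induce a path a-b-c-d in G and D is an efficient dominating set of G, then b ∉ D and c ∉ D. -/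
open SimpleGraph

lemma key {V : Type*} (G : SimpleGraph V)
    (hfree : IsEmpty (SimpleGraph.pathGraph 5 ↪g G))
    (D : Set V) (hD : IsEffDomSet G D)
    (a b c d : V)
    (hab : G.Adj a b) (hbc : G.Adj b c) (hcd : G.Adj c d)
    (hac : ¬ G.Adj a c) (had : ¬ G.Adj a d) (hbd : ¬ G.Adj b d)
    (hacne : a ≠ c) (hadne : a ≠ d) (hbdne : b ≠ d) :
    b ∉ D := by
  intro hb
  obtain ⟨wc, hwc, hwcU⟩ := hD c
  obtain ⟨wb, hwb, hwbU⟩ := hD b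
  obtain ⟨wa, hwa, hwaU⟩ := hD a
  have hbwc : b = wc := hwcU b ⟨hb, Or.inr hbc⟩
  have hbwb : b = wb := hwbU b ⟨hb, Or.inl rfl⟩
  have hbwa : b = wa := hwaU b ⟨hb, Or.inr hab.symm⟩
  have domc : ∀ x, x ∈ D → (x = c ∨ G.Adj x c) → x = b := fun x hx h =>
    (hwcU x ⟨hx, h⟩).trans hbwc.symm
  have domb : ∀ x, x ∈ D → (x = b ∨ G.Adj x b) → x = b := fun x hx h =>
    (hwbU x ⟨hx, h⟩).trans hbwb.symm
  have doma : ∀ x, x ∈ D → (x = a ∨ G.Adj x a) → x = b := fun x hx h =>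
    (hwaU x ⟨hx, h⟩).trans hbwa.symm
  obtain ⟨e, ⟨heD, hed⟩, _⟩ := hD d
  have hde : G.Adj e d := by
    rcases hed with rfl | h
    · exact absurd (domc e heD (Or.inr hcd.symm)) hbdne.symm
    · exact h
  have heb : e ≠ b := by
    rintro rfl
    exact hbd hde
  have henc : ¬ G.Adj e c := fun h => heb (domc e heD (Or.inr h))
  have hecne : e ≠ c := fun h => heb (domc e heD (Or.inl h))
  have henb : ¬ G.Adj e b := fun h => heb (domb e heD (Or.inr h))
  have hena : ¬ G.Adj e a := fun h => heb (doma e heD (Or.inr h))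
  have heane : e ≠ a := by rintro rfl; exact had hde
  -- build P5 embedding a-b-c-d-e
  have habne := hab.ne
  have hbcne := hbc.ne
  have hcdne := hcd.ne
  have hdene := hde.ne'
  refine hfree.false ?_
  refine ⟨⟨![a, b, c, d, e], ?_⟩, ?_⟩
  · have hne : ∀ x y : V, G.Adj x y → x ≠ y := fun _ _ h => h.ne
    intro i j h
    fin_cases i <;> fin_cases j <;> simp only [Matrix.cons_val', Matrix.cons_val_zero,
      Matrix.cons_val_one, Matrix.head_cons, Matrix.head_fin_const, Matrix.cons_val_fin_one,
      Fin.isValue, Matrix.cons_val_succ] at h <;>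
      first
        | rfl
        | exact absurd h habne | exact absurd h.symm habne
        | exact absurd h hbcne | exact absurd h.symm hbcne
        | exact absurd h hcdne | exact absurd h.symm hcdne
        | exact absurd h hdene.symm | exact absurd h.symm hdene.symm
        | exact absurd h hacne | exact absurd h.symm hacne
        | exact absurd h hadne | exact absurd h.symm hadne
        | exact absurd h hbdne | exact absurd h.symm hbdne
        | exact absurd h hecne.symm | exact absurd h.symm hecne.symm
        | exact absurd h heb.symm | exact absurd h.symm heb.symm
        | exact absurd h heane.symm | exact absurd h.symm heane.symm
  · intro i j
    constructor
    · intro h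
      fin_cases i <;> fin_cases j <;>
        simp only [Matrix.cons_val', Matrix.cons_val_zero, Matrix.cons_val_one,
          Matrix.head_cons, Fin.isValue, Matrix.cons_val_succ] at h <;>
        simp only [pathGraph_adj] <;> norm_num <;>
        first
          | exact h
          | exact h.symm
          | exact absurd h hac | exact absurd h had | exact absurd h hbd
          | exact absurd h.symm hac | exact absurd h.symm had | exact absurd h.symm hbd
          | exact absurd h hena | exact absurd h henb | exact absurd h henc
          | exact absurd h.symm hena | exact absurd h.symm henb | exact absurd h.symm henc
          | exact absurd h (G.loopless.irrefl _)
    · intro h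
      rw [pathGraph_adj] at h
      fin_cases i <;> fin_cases j <;> norm_num at h <;> norm_num <;>
        first
          | exact hab | exact hbc | exact hcd | exact hde
          | exact hab.symm | exact hbc.symm | exact hcd.symm | exact hde.symm

theorem stmt6 {V : Type*} [Fintype V] (G : SimpleGraph V)
    (hfree : IsEmpty (SimpleGraph.pathGraph 5 ↪g G))
    (D : Set V) (hD : IsEffDomSet G D)
    (a b c d : V)
    (hab : G.Adj a b) (hbc : G.Adj b c) (hcd : G.Adj c d)
    (hac : ¬ G.Adj a c) (had : ¬ G.Adj a d) (hbd : ¬ G.Adj b d)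
    (hacne : a ≠ c) (hadne : a ≠ d) (hbdne : b ≠ d) :
    b ∉ D ∧ c ∉ D := by
  constructor
  · exact key G hfree D hD a b c d hab hbc hcd hac had hbd hacne hadne hbdne
  · exact key G hfree D hD d c b a hcd.symm hbc.symm hab.symm
      (fun h => hbd h.symm) (fun h => had h.symm) (fun h => hac h.symm)
      hbdne.symm hadne.symm hacne.symm
end

section
/- Let G be a connected P₅-free graph with an efficient dominating set D, let v ∈ D, and let Nᵢ denote the set of vertices at distance i from v. Then Nᵢ = ∅ for all i > 3, and for every edge yz of the induced subgraph G[N₃], N(y) ∩ N₂ = N(z) ∩ N₂. -/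
open SimpleGraph

/-- From five vertices forming an induced path we get an embedding of `pathGraph 5`. -/
lemma no_ind_P5 {V : Type*} (G : SimpleGraph V)
    (hfree : IsEmpty (SimpleGraph.pathGraph 5 ↪g G)) (a b c d e : V)
    (h1 : G.Adj a b) (h2 : G.Adj b c) (h3 : G.Adj c d) (h4 : G.Adj d e)
    (n1 : ¬G.Adj a c) (n2 : ¬G.Adj a d) (n3 : ¬G.Adj a e)
    (n4 : ¬G.Adj b d) (n5 : ¬G.Adj b e) (n6 : ¬G.Adj c e) : False := by
  have hab : a ≠ b := h1.ne
  have hbc : b ≠ c := h2.ne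
  have hcd : c ≠ d := h3.ne
  have hde : d ≠ e := h4.ne
  have hac : a ≠ c := fun h => n2 (h ▸ h3)
  have had : a ≠ d := fun h => n3 (h ▸ h4)
  have hae : a ≠ e := fun h => n2 (h ▸ h4.symm)
  have hbd : b ≠ d := fun h => n5 (h ▸ h4)
  have hbe : b ≠ e := fun h => n3 (h ▸ h1)
  have hce : c ≠ e := fun h => n5 (h ▸ h2)
  have n1' : ¬G.Adj c a := fun h => n1 h.symm
  have n2' : ¬G.Adj d a := fun h => n2 h.symm
  have n3' : ¬G.Adj e a := fun h => n3 h.symm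
  have n4' : ¬G.Adj d b := fun h => n4 h.symm
  have n5' : ¬G.Adj e b := fun h => n5 h.symm
  have n6' : ¬G.Adj e c := fun h => n6 h.symm
  refine hfree.false ⟨⟨![a, b, c, d, e], ?_⟩, ?_⟩
  · intro i j hij
    fin_cases i <;> fin_cases j <;> simp_all
  · intro i j
    fin_cases i <;> fin_cases j <;>
      simp [SimpleGraph.pathGraph_adj, h1, h2, h3, h4, h1.symm, h2.symm, h3.symm, h4.symm,
        n1, n2, n3, n4, n5, n6, n1', n2', n3', n4', n5', n6',
        G.irrefl] <;> simp [DFunLike.coe, h1, h2, h3, h4, h1.symm, h2.symm, h3.symm, h4.symm, n1, n2, n3, n4, n5, n6, n1', n2', n3', n4', n5', n6']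

/-- A vertex at distance `n+1` has a neighbor at distance `n`. -/
lemma exists_pred {V : Type*} (G : SimpleGraph V) (hG : G.Connected) (v w : V) (n : ℕ)
    (h : G.dist v w = n + 1) : ∃ u, G.Adj u w ∧ G.dist v u = n := by
  obtain ⟨p, hp⟩ := G.exists_walk_of_dist_ne_zero (u := v) (v := w) (h ▸ Nat.succ_ne_zero n)
  have hvw : w ≠ v := by
    intro hvw
    rw [hvw, SimpleGraph.dist_self] at h
    omega
  obtain ⟨u, hadj, q, hq⟩ := SimpleGraph.Walk.exists_eq_cons_of_ne hvw p.reverse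
  have hql : q.length = n := by
    have := congrArg SimpleGraph.Walk.length hq
    simp [hp, h] at this
    omega
  have hle : G.dist v u ≤ n := by
    have h' := G.dist_le q
    rw [SimpleGraph.dist_comm] at h'
    omega
  have hge : n ≤ G.dist v u := by
    have ht := hG.dist_triangle (u := v) (v := u) (w := w)
    have h1 : G.dist u w = 1 := SimpleGraph.dist_eq_one_iff_adj.mpr hadj.symm
    omega
  exact ⟨u, hadj.symm, le_antisymm hle hge⟩

/-- distances up to `G.dist v w` are attained. -/
lemma attained {V : Type*} (G : SimpleGraph V) (hG : G.Connected) (v : V) :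
    ∀ n, ∀ w, G.dist v w = n → ∀ k, k ≤ n → ∃ u, G.dist v u = k := by
  intro n
  induction n with
  | zero => exact fun w _ k hk => ⟨v, by simp [Nat.le_zero.mp hk]⟩
  | succ m ih =>
    intro w hw k hk
    rcases Nat.lt_or_ge k (m + 1) with hlt | hge
    · obtain ⟨u, _, hu⟩ := exists_pred G hG v w m hw
      exact ih u hu k (by omega)
    · have hkm : k = m + 1 := by omega
      exact ⟨w, hkm ▸ hw⟩

lemma adj_dist_le {V : Type*} (G : SimpleGraph V) (hG : G.Connected) {v a b : V}
    (h : G.Adj a b) : G.dist v b ≤ G.dist v a + 1 := by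
  have := hG.dist_triangle (u := v) (v := a) (w := b)
  have hab : G.dist a b = 1 := SimpleGraph.dist_eq_one_iff_adj.mpr h
  omega

theorem stmt8 {V : Type*} [Fintype V] (G : SimpleGraph V) (hG : G.Connected)
    (hfree : IsEmpty (SimpleGraph.pathGraph 5 ↪g G))
    (D : Set V) (hD : IsEffDomSet G D) (v : V) (hv : v ∈ D)
    (N : ℕ → Set V) (hN : ∀ i, N i = {w | G.dist v w = i}) :
    (∀ i, 3 < i → N i = ∅) ∧
    (∀ y z : V, y ∈ N 3 → z ∈ N 3 → G.Adj y z →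
      {x | G.Adj y x ∧ x ∈ N 2} = {x | G.Adj z x ∧ x ∈ N 2}) := by
  -- a convenient nonadjacency criterion
  have nonadj : ∀ a b : V, G.dist v a + 2 ≤ G.dist v b → ¬G.Adj a b := by
    intro a b hab h
    have := adj_dist_le G hG (v := v) h
    omega
  constructor
  · intro i hi
    rw [hN i]
    ext w
    simp only [Set.mem_setOf_eq, Set.mem_empty_iff_false, iff_false]
    intro hw
    obtain ⟨x4, hx4⟩ := attained G hG v i w hw 4 (by omega)
    obtain ⟨x3, a34, hx3⟩ := exists_pred G hG v x4 3 hx4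
    obtain ⟨x2, a23, hx2⟩ := exists_pred G hG v x3 2 hx3
    obtain ⟨x1, a12, hx1⟩ := exists_pred G hG v x2 1 hx2
    obtain ⟨x0, a01, hx0⟩ := exists_pred G hG v x1 0 hx1
    exact no_ind_P5 G hfree x0 x1 x2 x3 x4 a01 a12 a23 a34
      (nonadj x0 x2 (by omega)) (nonadj x0 x3 (by omega)) (nonadj x0 x4 (by omega))
      (nonadj x1 x3 (by omega)) (nonadj x1 x4 (by omega)) (nonadj x2 x4 (by omega))
  · -- symmetric containment
    have key : ∀ y z : V, G.dist v y = 3 → G.dist v z = 3 → G.Adj y z →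
        {x | G.Adj y x ∧ G.dist v x = 2} ⊆ {x | G.Adj z x ∧ G.dist v x = 2} := by
      intro y z hy hz hyz x hx
      obtain ⟨hyx, hx2⟩ := hx
      refine ⟨?_, hx2⟩
      by_contra hzx
      obtain ⟨u, hux, hu1⟩ := exists_pred G hG v x 1 hx2
      obtain ⟨u0, hu0u, hu0⟩ := exists_pred G hG v u 0 hu1
      exact no_ind_P5 G hfree z y x u u0 hyz.symm hyx hux.symm hu0u.symm
        hzx
        (fun h => nonadj u z (by omega) h.symm)
        (fun h => nonadj u0 z (by omega) h.symm)
        (fun h => nonadj u y (by omega) h.symm)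
        (fun h => nonadj u0 y (by omega) h.symm)
        (fun h => nonadj u0 x (by omega) h.symm)
    intro y z hy hz hyz
    rw [hN 3] at hy hz
    simp only [Set.mem_setOf_eq] at hy hz
    have h2 := hN 2
    apply Set.Subset.antisymm
    · intro x hx
      simp only [Set.mem_setOf_eq, h2] at hx ⊢
      exact key y z hy hz hyz hx
    · intro x hx
      simp only [Set.mem_setOf_eq, h2] at hx ⊢
      exact key z y hz hy hyz.symm hx
end

section
/- Let G be a connected P₅-free graph, v a vertex, and N₁, N₂, N₃ its distance levels with N₄ = ∅. Suppose D ⊆ V contains v, for every w ∈ N₂ the set N(w) ∩ N₃ is exactly the vertex set of one connected component of G[N₃], and D consists of v together with exactly one universal vertex from each component of G[N₃] (a vertex adjacent to all other vertices of its component). Then D is an efficient dominating set of G. -/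
open SimpleGraph

/-- The vertex set of the connected component of `u` in the subgraph of `G`
induced on `S` (empty if `u ∉ S`). -/
def compOf {V : Type*} (G : SimpleGraph V) (S : Set V) (u : V) : Set V :=
  {w | ∃ (hu : u ∈ S) (hw : w ∈ S), (G.induce S).Reachable ⟨u, hu⟩ ⟨w, hw⟩}

section aux
variable {V : Type*} {G : SimpleGraph V} {S : Set V}

lemma exists_dist_pred (hG : G.Connected) (v w : V) (m : ℕ)
    (h : G.dist v w = m + 1) : ∃ u, G.Adj u w ∧ G.dist v u = m := by
  obtain ⟨p, hp⟩ := (hG v w).exists_walk_length_eq_dist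
  rw [h] at hp
  set q := p.reverse with hq
  have hql : q.length = m + 1 := by simp [hq, hp]
  have hqn : ¬ q.Nil := by
    intro hn
    rw [SimpleGraph.Walk.nil_iff_length_eq.mp hn] at hql; omega
  refine ⟨q.getVert 1, (Walk.adj_snd hqn).symm, ?_⟩
  have htl : q.tail.length = m := by
    have := Walk.length_tail_add_one hqn
    omega
  have h1 : G.dist v (q.getVert 1) ≤ m := by
    have := SimpleGraph.dist_le q.tail.reverse
    simpa [htl, hql] using this
  have h2 : m ≤ G.dist v (q.getVert 1) := by
    have ht := hG.dist_triangle (u := v) (v := q.getVert 1) (w := w)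
    have ha : G.dist (q.getVert 1) w ≤ 1 := by
      rw [SimpleGraph.dist_comm]
      exact le_of_eq (dist_eq_one_iff_adj.mpr (Walk.adj_snd hqn))
    omega
  omega

lemma compOf_self {u : V} (hu : u ∈ S) : u ∈ compOf G S u := ⟨hu, hu, Reachable.refl _⟩

lemma compOf_symm {u w : V} (h : w ∈ compOf G S u) : u ∈ compOf G S w := by
  obtain ⟨hu, hw, hr⟩ := h; exact ⟨hw, hu, hr.symm⟩

lemma compOf_subset {u w : V} (h : w ∈ compOf G S u) : w ∈ S := h.2.1

lemma compOf_adj {u w : V} (hu : u ∈ S) (hw : w ∈ S) (hadj : G.Adj u w) :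
    w ∈ compOf G S u :=
  ⟨hu, hw, Adj.reachable (by simpa using hadj)⟩

end aux

theorem stmt9 {V : Type*} [Fintype V] (G : SimpleGraph V) (hG : G.Connected)
    (hfree : IsEmpty (SimpleGraph.pathGraph 5 ↪g G))
    (v : V) (N : ℕ → Set V) (hN : ∀ i, N i = {w | G.dist v w = i})
    (hN4 : N 4 = ∅)
    (D : Set V) (hvD : v ∈ D)
    -- for every w ∈ N₂, N(w) ∩ N₃ is exactly one component of G[N₃]
    (hw : ∀ w ∈ N 2, ∃ u ∈ N 3, {x | G.Adj w x ∧ x ∈ N 3} = compOf G (N 3) u)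
    -- every vertex of D other than v is a universal vertex of its component of G[N₃]
    (hDuniv : ∀ d ∈ D, d ≠ v → d ∈ N 3 ∧
      ∀ w ∈ compOf G (N 3) d, w ≠ d → G.Adj d w)
    -- D contains exactly one vertex from each component of G[N₃]
    (hDone : ∀ u ∈ N 3, ∃! d : V, d ∈ D ∧ d ∈ compOf G (N 3) u) :
    IsEffDomSet G D := by
  have hmem : ∀ (i : ℕ) (u : V), u ∈ N i ↔ G.dist v u = i := by
    intro i u; rw [hN i]; exact Iff.rfl
  have key4 : ∀ (j : ℕ) (w : V), G.dist v w = 4 + j → False := by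
    intro j
    induction j with
    | zero =>
      intro w h
      have : w ∈ N 4 := (hmem 4 w).mpr h
      rw [hN4] at this; exact this
    | succ j ih =>
      intro w h
      obtain ⟨u, _, hu⟩ := exists_dist_pred hG v w (4 + j) (by omega)
      exact ih u hu
  have hle3 : ∀ u : V, G.dist v u ≤ 3 := by
    intro u; by_contra h
    exact key4 (G.dist v u - 4) u (by omega)
  intro u
  have hd3 := hle3 u
  have hcases : G.dist v u = 0 ∨ G.dist v u = 1 ∨ G.dist v u = 2 ∨ G.dist v u = 3 := by omega
  -- vertices of D other than v are at distance 3
  have hDdist : ∀ d ∈ D, d ≠ v → G.dist v d = 3 := fun d hd hne =>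
    (hmem 3 d).mp (hDuniv d hd hne).1
  rcases hcases with h0 | h1 | h2 | h3
  · -- u = v
    have huv : v = u := hG.dist_eq_zero_iff.mp h0
    refine ⟨v, ⟨hvD, Or.inl huv⟩, ?_⟩
    rintro d ⟨hdD, hd⟩
    by_contra hne
    have hd3' := hDdist d hdD hne
    rcases hd with heq | hadj
    · exact hne (heq.trans huv.symm)
    · have : G.dist v d = 1 := by
        rw [SimpleGraph.dist_comm]
        exact dist_eq_one_iff_adj.mpr (huv ▸ hadj)
      omega
  · -- dist v u = 1
    have hadj : G.Adj v u := dist_eq_one_iff_adj.mp h1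
    refine ⟨v, ⟨hvD, Or.inr hadj⟩, ?_⟩
    rintro d ⟨hdD, hd⟩
    by_contra hne
    have hd3' := hDdist d hdD hne
    rcases hd with heq | hadj'
    · rw [heq] at hd3'; omega
    · have h1' : G.dist u d = 1 := by
        rw [SimpleGraph.dist_comm]
        exact dist_eq_one_iff_adj.mpr hadj'
      have := hG.dist_triangle (u := v) (v := u) (w := d)
      omega
  · -- dist v u = 2
    have huN2 : u ∈ N 2 := (hmem 2 u).mpr h2
    obtain ⟨u0, hu0, hset⟩ := hw u huN2
    obtain ⟨d, ⟨hdD, hdc⟩, huniq⟩ := hDone u0 hu0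
    have hdset : d ∈ {x | G.Adj u x ∧ x ∈ N 3} := by rw [hset]; exact hdc
    refine ⟨d, ⟨hdD, Or.inr hdset.1.symm⟩, ?_⟩
    rintro d' ⟨hd'D, hd'⟩
    have hd'v : d' ≠ v := by
      intro hdv'
      rcases hd' with heq | hadj
      · rw [hdv'] at heq; rw [← heq] at h2
        simp [SimpleGraph.dist_self] at h2
      · have : G.dist v u = 1 := dist_eq_one_iff_adj.mpr (hdv' ▸ hadj)
        omega
    have hd'3 := hDdist d' hd'D hd'v
    rcases hd' with heq | hadj
    · rw [heq] at hd'3; omega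
    · have : d' ∈ {x | G.Adj u x ∧ x ∈ N 3} := ⟨hadj.symm, (hmem 3 d').mpr hd'3⟩
      rw [hset] at this
      exact huniq d' ⟨hd'D, this⟩
  · -- dist v u = 3
    have huN3 : u ∈ N 3 := (hmem 3 u).mpr h3
    obtain ⟨d, ⟨hdD, hdc⟩, huniq⟩ := hDone u huN3
    have hdv : d ≠ v := by
      intro h
      have h' := (hmem 3 d).mp (compOf_subset hdc)
      rw [h] at h'
      simp [SimpleGraph.dist_self] at h'
    refine ⟨d, ⟨hdD, ?_⟩, ?_⟩
    · by_cases hdu : d = u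
      · exact Or.inl hdu
      · exact Or.inr ((hDuniv d hdD hdv).2 u (compOf_symm hdc) (fun h => hdu h.symm))
    · rintro d' ⟨hd'D, hd'⟩
      have hd'v : d' ≠ v := by
        intro hdv'
        rcases hd' with heq | hadj
        · rw [hdv'] at heq; rw [← heq] at h3
          simp [SimpleGraph.dist_self] at h3
        · have : G.dist v u = 1 := dist_eq_one_iff_adj.mpr (hdv' ▸ hadj)
          omega
      have hd'3 : d' ∈ N 3 := (hDuniv d' hd'D hd'v).1
      have hd'c : d' ∈ compOf G (N 3) u := by
        rcases hd' with heq | hadj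
        · rw [heq]; exact compOf_self huN3
        · exact compOf_symm (compOf_adj hd'3 huN3 hadj)
      exact huniq d' ⟨hd'D, hd'c⟩
end

section
/- Let G be a connected {P₆, S₁,₂,₂}-free graph with efficient dominating set D, v ∈ D, and distance levels Nᵢ from v. Then at most one vertex of D ∩ N₃ has a neighbor in N₄. -/
open SimpleGraph

/-- `S₁,₂,₂`: a chordless path 0-1-2-3-4 plus a vertex 5 adjacent only to 2. -/
def S122 : SimpleGraph (Fin 6) :=
  SimpleGraph.fromEdgeSet {s(0, 1), s(1, 2), s(2, 3), s(3, 4), s(2, 5)}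

namespace Stmt10Aux

variable {V : Type*} {G : SimpleGraph V}

/-- Helper: tuple of six vertices as a function from `Fin 6`. -/
def fvec (w0 w1 w2 w3 w4 w5 : V) : Fin 6 → V
  | 0 => w0 | 1 => w1 | 2 => w2 | 3 => w3 | 4 => w4 | 5 => w5

lemma adjDistLe {x y : V} (h : G.Adj x y) : G.dist x y ≤ 1 :=
  dist_le (SimpleGraph.Walk.cons h SimpleGraph.Walk.nil)

lemma gap (hG : G.Connected) {v x y : V} {m n : ℕ} (hx : G.dist v x = m)
    (hy : G.dist v y = n) (h : m + 2 ≤ n) : ¬ G.Adj x y := by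
  intro hadj
  have h1 : G.dist v y ≤ G.dist v x + G.dist x y := hG.dist_triangle
  have h2 := adjDistLe hadj
  omega

lemma nedist {v x y : V} {m n : ℕ} (hx : G.dist v x = m) (hy : G.dist v y = n)
    (h : m ≠ n) : x ≠ y := by
  rintro rfl
  rw [hx] at hy
  exact h hy

lemma eff {D : Set V} (hD : IsEffDomSet G D) {d d' u : V} (hd : d ∈ D) (hd' : d' ∈ D)
    (h1 : d = u ∨ G.Adj d u) (h2 : d' = u ∨ G.Adj d' u) : d = d' := by
  obtain ⟨w, _, hw⟩ := hD u
  exact (hw d ⟨hd, h1⟩).trans (hw d' ⟨hd', h2⟩).symm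

set_option maxHeartbeats 2000000 in
lemma buildP6 (w0 w1 w2 w3 w4 w5 : V)
    (e01 : G.Adj w0 w1) (e12 : G.Adj w1 w2) (e23 : G.Adj w2 w3)
    (e34 : G.Adj w3 w4) (e45 : G.Adj w4 w5)
    (n02 : ¬G.Adj w0 w2) (n03 : ¬G.Adj w0 w3) (n04 : ¬G.Adj w0 w4) (n05 : ¬G.Adj w0 w5)
    (n13 : ¬G.Adj w1 w3) (n14 : ¬G.Adj w1 w4) (n15 : ¬G.Adj w1 w5)
    (n24 : ¬G.Adj w2 w4) (n25 : ¬G.Adj w2 w5) (n35 : ¬G.Adj w3 w5)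
    (d02 : w0 ≠ w2) (d03 : w0 ≠ w3) (d04 : w0 ≠ w4) (d05 : w0 ≠ w5)
    (d13 : w1 ≠ w3) (d14 : w1 ≠ w4) (d15 : w1 ≠ w5)
    (d24 : w2 ≠ w4) (d25 : w2 ≠ w5) (d35 : w3 ≠ w5) :
    Nonempty (pathGraph 6 ↪g G) := by
  have d01 := e01.ne; have d12 := e12.ne; have d23 := e23.ne
  have d34 := e34.ne; have d45 := e45.ne
  refine ⟨⟨⟨fvec w0 w1 w2 w3 w4 w5, ?_⟩, ?_⟩⟩
  · intro a b hab
    fin_cases a <;> fin_cases b <;> simp only [fvec] at hab ⊢ <;>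
      first
        | rfl
        | exact absurd hab (by assumption)
        | exact absurd hab.symm (by assumption)
  · intro a b
    fin_cases a <;> fin_cases b <;>
      simp only [fvec, pathGraph_adj, Fin.isValue] <;>
      norm_num <;>
      first
        | assumption
        | exact G.irrefl
        | exact e01.symm | exact e12.symm | exact e23.symm | exact e34.symm | exact e45.symm
        | exact fun h => n02 h.symm | exact fun h => n03 h.symm | exact fun h => n04 h.symm
        | exact fun h => n05 h.symm | exact fun h => n13 h.symm | exact fun h => n14 h.symm
        | exact fun h => n15 h.symm | exact fun h => n24 h.symm | exact fun h => n25 h.symm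
        | exact fun h => n35 h.symm

set_option maxHeartbeats 2000000 in
lemma buildS122 (w0 w1 w2 w3 w4 w5 : V)
    (e01 : G.Adj w0 w1) (e12 : G.Adj w1 w2) (e23 : G.Adj w2 w3)
    (e34 : G.Adj w3 w4) (e25 : G.Adj w2 w5)
    (n02 : ¬G.Adj w0 w2) (n03 : ¬G.Adj w0 w3) (n04 : ¬G.Adj w0 w4) (n05 : ¬G.Adj w0 w5)
    (n13 : ¬G.Adj w1 w3) (n14 : ¬G.Adj w1 w4) (n15 : ¬G.Adj w1 w5)
    (n24 : ¬G.Adj w2 w4) (n35 : ¬G.Adj w3 w5) (n45 : ¬G.Adj w4 w5)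
    (d02 : w0 ≠ w2) (d03 : w0 ≠ w3) (d04 : w0 ≠ w4) (d05 : w0 ≠ w5)
    (d13 : w1 ≠ w3) (d14 : w1 ≠ w4) (d15 : w1 ≠ w5)
    (d24 : w2 ≠ w4) (d35 : w3 ≠ w5) (d45 : w4 ≠ w5) :
    Nonempty (S122 ↪g G) := by
  have d01 := e01.ne; have d12 := e12.ne; have d23 := e23.ne
  have d34 := e34.ne; have d25 := e25.ne
  refine ⟨⟨⟨fvec w0 w1 w2 w3 w4 w5, ?_⟩, ?_⟩⟩
  · intro a b hab
    fin_cases a <;> fin_cases b <;> simp only [fvec] at hab ⊢ <;>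
      first
        | rfl
        | exact absurd hab (by assumption)
        | exact absurd hab.symm (by assumption)
  · intro a b
    fin_cases a <;> fin_cases b <;>
      simp (config := { decide := true }) only [fvec, S122, fromEdgeSet_adj,
        Set.mem_insert_iff, Set.mem_singleton_iff, Sym2.eq, Sym2.rel_iff',
        Prod.mk.injEq, Prod.swap_prod_mk, ne_eq, Fin.ext_iff, Fin.isValue,
        Fin.val_zero, Fin.val_one, iff_true, iff_false, not_false_iff,
        or_self, and_self, or_true, true_or, and_true, true_and, or_false, false_or,
        and_false, false_and, not_true, not_false_eq_true] <;>
      first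
        | assumption
        | exact G.irrefl
        | exact e01.symm | exact e12.symm | exact e23.symm | exact e34.symm | exact e25.symm
        | exact fun h => n02 h.symm | exact fun h => n03 h.symm | exact fun h => n04 h.symm
        | exact fun h => n05 h.symm | exact fun h => n13 h.symm | exact fun h => n14 h.symm
        | exact fun h => n15 h.symm | exact fun h => n24 h.symm | exact fun h => n35 h.symm
        | exact fun h => n45 h.symm

end Stmt10Aux

open Stmt10Aux

theorem stmt10 {V : Type*} [Fintype V] (G : SimpleGraph V) (hG : G.Connected)
    (hP6free : IsEmpty (SimpleGraph.pathGraph 6 ↪g G))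
    (hSfree : IsEmpty (S122 ↪g G))
    (D : Set V) (hD : IsEffDomSet G D) (v : V) (hv : v ∈ D) :
    ∀ d₁ ∈ D, ∀ d₂ ∈ D, G.dist v d₁ = 3 → G.dist v d₂ = 3 →
      (∃ x, G.Adj d₁ x ∧ G.dist v x = 4) → (∃ x, G.Adj d₂ x ∧ G.dist v x = 4) →
      d₁ = d₂ := by
  intro d₁ hd₁ d₂ hd₂ Dd1 Dd2 hx1 hx2
  by_contra hne
  obtain ⟨x₁, hx₁adj, Dx1⟩ := hx1
  obtain ⟨x₂, hx₂adj, Dx2⟩ := hx2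
  have Dv : G.dist v v = 0 := SimpleGraph.dist_self
  -- extract a shortest path v - a₁ - b₁ - d₁
  obtain ⟨p₁, hp₁⟩ := hG.exists_walk_length_eq_dist v d₁
  rw [Dd1] at hp₁
  set a₁ := p₁.getVert 1 with ha₁def
  set b₁ := p₁.getVert 2 with hb₁def
  have e1a : G.Adj v a₁ := by
    have := p₁.adj_getVert_succ (i := 0) (by omega)
    rwa [p₁.getVert_zero] at this
  have e1b : G.Adj a₁ b₁ := p₁.adj_getVert_succ (i := 1) (by omega)
  have e1d : G.Adj b₁ d₁ := by
    have := p₁.adj_getVert_succ (i := 2) (by omega)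
    rwa [show (2 : ℕ) + 1 = p₁.length by omega, p₁.getVert_length] at this
  -- extract a shortest path v - a₂ - b₂ - d₂
  obtain ⟨p₂, hp₂⟩ := hG.exists_walk_length_eq_dist v d₂
  rw [Dd2] at hp₂
  set a₂ := p₂.getVert 1 with ha₂def
  set b₂ := p₂.getVert 2 with hb₂def
  have e2a : G.Adj v a₂ := by
    have := p₂.adj_getVert_succ (i := 0) (by omega)
    rwa [p₂.getVert_zero] at this
  have e2b : G.Adj a₂ b₂ := p₂.adj_getVert_succ (i := 1) (by omega)
  have e2d : G.Adj b₂ d₂ := by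
    have := p₂.adj_getVert_succ (i := 2) (by omega)
    rwa [show (2 : ℕ) + 1 = p₂.length by omega, p₂.getVert_length] at this
  -- distance levels
  have Da1 : G.dist v a₁ = 1 := by
    have u1 := adjDistLe e1a
    have u2 := adjDistLe e1b
    have u3 := adjDistLe e1d
    have t1 : G.dist v b₁ ≤ G.dist v a₁ + G.dist a₁ b₁ := hG.dist_triangle
    have t2 : G.dist v d₁ ≤ G.dist v b₁ + G.dist b₁ d₁ := hG.dist_triangle
    omega
  have Db1 : G.dist v b₁ = 2 := by
    have u1 := adjDistLe e1a
    have u2 := adjDistLe e1b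
    have u3 := adjDistLe e1d
    have t1 : G.dist v b₁ ≤ G.dist v a₁ + G.dist a₁ b₁ := hG.dist_triangle
    have t2 : G.dist v d₁ ≤ G.dist v b₁ + G.dist b₁ d₁ := hG.dist_triangle
    omega
  have Da2 : G.dist v a₂ = 1 := by
    have u1 := adjDistLe e2a
    have u2 := adjDistLe e2b
    have u3 := adjDistLe e2d
    have t1 : G.dist v b₂ ≤ G.dist v a₂ + G.dist a₂ b₂ := hG.dist_triangle
    have t2 : G.dist v d₂ ≤ G.dist v b₂ + G.dist b₂ d₂ := hG.dist_triangle
    omega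
  have Db2 : G.dist v b₂ = 2 := by
    have u1 := adjDistLe e2a
    have u2 := adjDistLe e2b
    have u3 := adjDistLe e2d
    have t1 : G.dist v b₂ ≤ G.dist v a₂ + G.dist a₂ b₂ := hG.dist_triangle
    have t2 : G.dist v d₂ ≤ G.dist v b₂ + G.dist b₂ d₂ := hG.dist_triangle
    omega
  -- efficiency consequences
  have nd1d2 : ¬G.Adj d₁ d₂ := fun h => hne (eff hD hd₁ hd₂ (Or.inr h) (Or.inl rfl))
  have nb1d2 : ¬G.Adj b₁ d₂ := fun h =>
    hne (eff hD hd₁ hd₂ (Or.inr e1d.symm) (Or.inr h.symm))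
  have nb2d1 : ¬G.Adj b₂ d₁ := fun h =>
    hne (eff hD hd₁ hd₂ (Or.inr h.symm) (Or.inr e2d.symm))
  have nx1d2 : ¬G.Adj x₁ d₂ := fun h =>
    hne (eff hD hd₁ hd₂ (Or.inr hx₁adj) (Or.inr h.symm))
  have nx2d1 : ¬G.Adj x₂ d₁ := fun h =>
    hne (eff hD hd₁ hd₂ (Or.inr h.symm) (Or.inr hx₂adj))
  have neb : b₁ ≠ b₂ := fun h =>
    hne (eff hD hd₁ hd₂ (Or.inr e1d.symm) (Or.inr (h ▸ e2d.symm)))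
  have nex : x₁ ≠ x₂ := fun h =>
    hne (eff hD hd₁ hd₂ (Or.inr hx₁adj) (Or.inr (h ▸ hx₂adj)))
  by_cases hbb : G.Adj b₁ b₂
  · by_cases hxx : G.Adj x₁ x₂
    · -- induced P6 : a₁ - b₁ - d₁ - x₁ - x₂ - d₂
      obtain ⟨e⟩ := buildP6 (G := G) a₁ b₁ d₁ x₁ x₂ d₂
        e1b e1d hx₁adj hxx hx₂adj.symm
        (gap hG Da1 Dd1 (by norm_num)) (gap hG Da1 Dx1 (by norm_num))
        (gap hG Da1 Dx2 (by norm_num)) (gap hG Da1 Dd2 (by norm_num))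
        (gap hG Db1 Dx1 (by norm_num)) (gap hG Db1 Dx2 (by norm_num))
        nb1d2 (fun h => nx2d1 h.symm) nd1d2 nx1d2
        (nedist Da1 Dd1 (by norm_num)) (nedist Da1 Dx1 (by norm_num))
        (nedist Da1 Dx2 (by norm_num)) (nedist Da1 Dd2 (by norm_num))
        (nedist Db1 Dx1 (by norm_num)) (nedist Db1 Dx2 (by norm_num))
        (nedist Db1 Dd2 (by norm_num)) (nedist Dd1 Dx2 (by norm_num))
        hne (nedist Dx1 Dd2 (by norm_num))
      exact hP6free.false e
    · -- induced P6 : x₁ - d₁ - b₁ - b₂ - d₂ - x₂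
      obtain ⟨e⟩ := buildP6 (G := G) x₁ d₁ b₁ b₂ d₂ x₂
        hx₁adj.symm e1d.symm hbb e2d hx₂adj
        (fun h => gap hG Db1 Dx1 (by norm_num) h.symm)
        (fun h => gap hG Db2 Dx1 (by norm_num) h.symm)
        nx1d2 hxx
        (fun h => nb2d1 h.symm) nd1d2 (fun h => nx2d1 h.symm)
        nb1d2 (gap hG Db1 Dx2 (by norm_num)) (gap hG Db2 Dx2 (by norm_num))
        (nedist Dx1 Db1 (by norm_num)) (nedist Dx1 Db2 (by norm_num))
        (nedist Dx1 Dd2 (by norm_num)) nex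
        (nedist Dd1 Db2 (by norm_num)) hne (nedist Dd1 Dx2 (by norm_num))
        (nedist Db1 Dd2 (by norm_num)) (nedist Db1 Dx2 (by norm_num))
        (nedist Db2 Dx2 (by norm_num))
      exact hP6free.false e
  · by_cases h1 : G.Adj a₁ b₂
    · -- induced S122 : d₁ - b₁ - a₁ - b₂ - d₂ , center a₁ with leaf v
      obtain ⟨e⟩ := buildS122 (G := G) d₁ b₁ a₁ b₂ d₂ v
        e1d.symm e1b.symm h1 e2d e1a.symm
        (fun h => gap hG Da1 Dd1 (by norm_num) h.symm)
        (fun h => nb2d1 h.symm) nd1d2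
        (fun h => gap hG Dv Dd1 (by norm_num) h.symm)
        hbb nb1d2
        (fun h => gap hG Dv Db1 (by norm_num) h.symm)
        (gap hG Da1 Dd2 (by norm_num))
        (fun h => gap hG Dv Db2 (by norm_num) h.symm)
        (fun h => gap hG Dv Dd2 (by norm_num) h.symm)
        (nedist Dd1 Da1 (by norm_num)) (nedist Dd1 Db2 (by norm_num))
        hne (nedist Dd1 Dv (by norm_num))
        neb (nedist Db1 Dd2 (by norm_num)) (nedist Db1 Dv (by norm_num))
        (nedist Da1 Dd2 (by norm_num)) (nedist Db2 Dv (by norm_num))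
        (nedist Dd2 Dv (by norm_num))
      exact hSfree.false e
    · by_cases h2 : G.Adj a₂ b₁
      · -- induced S122 : d₁ - b₁ - a₂ - b₂ - d₂ , center a₂ with leaf v
        obtain ⟨e⟩ := buildS122 (G := G) d₁ b₁ a₂ b₂ d₂ v
          e1d.symm h2.symm e2b e2d e2a.symm
          (fun h => gap hG Da2 Dd1 (by norm_num) h.symm)
          (fun h => nb2d1 h.symm) nd1d2
          (fun h => gap hG Dv Dd1 (by norm_num) h.symm)
          hbb nb1d2
          (fun h => gap hG Dv Db1 (by norm_num) h.symm)
          (gap hG Da2 Dd2 (by norm_num))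
          (fun h => gap hG Dv Db2 (by norm_num) h.symm)
          (fun h => gap hG Dv Dd2 (by norm_num) h.symm)
          (nedist Dd1 Da2 (by norm_num)) (nedist Dd1 Db2 (by norm_num))
          hne (nedist Dd1 Dv (by norm_num))
          neb (nedist Db1 Dd2 (by norm_num)) (nedist Db1 Dv (by norm_num))
          (nedist Da2 Dd2 (by norm_num)) (nedist Db2 Dv (by norm_num))
          (nedist Dd2 Dv (by norm_num))
        exact hSfree.false e
      · have hnea : a₁ ≠ a₂ := fun h => h1 (h ▸ e2b)
        by_cases haa : G.Adj a₁ a₂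
        · -- induced P6 : d₁ - b₁ - a₁ - a₂ - b₂ - d₂
          obtain ⟨e⟩ := buildP6 (G := G) d₁ b₁ a₁ a₂ b₂ d₂
            e1d.symm e1b.symm haa e2b e2d
            (fun h => gap hG Da1 Dd1 (by norm_num) h.symm)
            (fun h => gap hG Da2 Dd1 (by norm_num) h.symm)
            (fun h => nb2d1 h.symm) nd1d2
            (fun h => h2 h.symm) hbb nb1d2
            h1 (gap hG Da1 Dd2 (by norm_num)) (gap hG Da2 Dd2 (by norm_num))
            (nedist Dd1 Da1 (by norm_num)) (nedist Dd1 Da2 (by norm_num))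
            (nedist Dd1 Db2 (by norm_num)) hne
            (nedist Db1 Da2 (by norm_num)) neb (nedist Db1 Dd2 (by norm_num))
            (nedist Da1 Db2 (by norm_num)) (nedist Da1 Dd2 (by norm_num))
            (nedist Da2 Dd2 (by norm_num))
          exact hP6free.false e
        · -- induced P6 : d₁ - b₁ - a₁ - v - a₂ - b₂
          obtain ⟨e⟩ := buildP6 (G := G) d₁ b₁ a₁ v a₂ b₂
            e1d.symm e1b.symm e1a.symm e2a e2b
            (fun h => gap hG Da1 Dd1 (by norm_num) h.symm)
            (fun h => gap hG Dv Dd1 (by norm_num) h.symm)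
            (fun h => gap hG Da2 Dd1 (by norm_num) h.symm)
            (fun h => nb2d1 h.symm)
            (fun h => gap hG Dv Db1 (by norm_num) h.symm)
            (fun h => h2 h.symm) hbb haa h1
            (gap hG Dv Db2 (by norm_num))
            (nedist Dd1 Da1 (by norm_num)) (nedist Dd1 Dv (by norm_num))
            (nedist Dd1 Da2 (by norm_num)) (nedist Dd1 Db2 (by norm_num))
            (nedist Db1 Dv (by norm_num)) (nedist Db1 Da2 (by norm_num))
            neb hnea (nedist Da1 Db2 (by norm_num)) (nedist Dv Db2 (by norm_num))
          exact hP6free.false e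
end

section
/- Let G be a connected {P₆, S₁,₂,₂}-free graph with efficient dominating set D, v ∈ D, and distance levels Nᵢ. Then D ∩ N₄ = ∅, i.e., no vertex at distance 4 from v belongs to D. -/
open SimpleGraph

instance : DecidableRel S122.Adj := fun i j => by
  rw [S122, SimpleGraph.fromEdgeSet_adj]
  simp only [Set.mem_insert_iff, Set.mem_singleton_iff]
  infer_instance

theorem stmt11 {V : Type*} [Fintype V] (G : SimpleGraph V) (hG : G.Connected)
    (hP6free : IsEmpty (SimpleGraph.pathGraph 6 ↪g G))
    (hSfree : IsEmpty (S122 ↪g G))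
    (D : Set V) (hD : IsEffDomSet G D) (v : V) (hv : v ∈ D) :
    D ∩ {w | G.dist v w = 4} = ∅ := by
  ext w
  simp only [Set.mem_inter_iff, Set.mem_setOf_eq, Set.mem_empty_iff_false, iff_false, not_and]
  intro hwD hdist
  obtain ⟨p, hp⟩ := (hG v w).exists_walk_length_eq_dist
  rw [hdist] at hp
  set x1 := p.getVert 1 with hx1
  set x2 := p.getVert 2 with hx2
  set x3 := p.getVert 3 with hx3
  have a01 : G.Adj v x1 := by
    have := p.adj_getVert_succ (i := 0) (by omega)
    simpa [p.getVert_zero] using this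
  have a12 : G.Adj x1 x2 := p.adj_getVert_succ (i := 1) (by omega)
  have a23 : G.Adj x2 x3 := p.adj_getVert_succ (i := 2) (by omega)
  have a34 : G.Adj x3 w := by
    have := p.adj_getVert_succ (i := 3) (by omega)
    have h4 : p.getVert 4 = w := by rw [← hp]; exact p.getVert_length
    rwa [h4] at this
  -- distance facts
  have step : ∀ a b c : V, G.Adj b c → G.dist a c ≤ G.dist a b + 1 := by
    intro a b c h
    calc G.dist a c ≤ G.dist a b + G.dist b c := hG.dist_triangle
      _ ≤ G.dist a b + 1 := by
          have : G.dist b c = 1 := dist_eq_one_iff_adj.mpr h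
          omega
  have d1le : G.dist v x1 ≤ 1 := by have := step v v x1 a01; simp [SimpleGraph.dist_self] at this; omega
  have d2le : G.dist v x2 ≤ 2 := by have := step v x1 x2 a12; omega
  have d3le : G.dist v x3 ≤ 3 := by have := step v x2 x3 a23; omega
  have d3 : G.dist v x3 = 3 := by
    have := step v x3 w a34; omega
  have d2 : G.dist v x2 = 2 := by
    have := step v x2 x3 a23; omega
  have d1 : G.dist v x1 = 1 := by
    have := step v x1 x2 a12; omega
  -- non-adjacencies along the path
  have nadj : ∀ a b : V, G.Adj a b → G.dist v b ≤ G.dist v a + 1 := fun a b h => step v a b h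
  have n02 : ¬ G.Adj v x2 := fun h => by have := dist_eq_one_iff_adj.mpr h; omega
  have n03 : ¬ G.Adj v x3 := fun h => by have := dist_eq_one_iff_adj.mpr h; omega
  have n04 : ¬ G.Adj v w := fun h => by have := dist_eq_one_iff_adj.mpr h; omega
  have n13 : ¬ G.Adj x1 x3 := fun h => by have := nadj x1 x3 h; omega
  have n14 : ¬ G.Adj x1 w := fun h => by have := nadj x1 w h; omega
  have n24 : ¬ G.Adj x2 w := fun h => by have := nadj x2 w h; omega
  -- domination facts
  -- distinct members of D are nonadjacent, and no common neighbor
  have lemA : ∀ a b, a ∈ D → b ∈ D → G.Adj a b → False := by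
    intro a b ha hb hab
    obtain ⟨d0, _, huniq⟩ := hD b
    have h1 : a = d0 := huniq a ⟨ha, Or.inr hab⟩
    have h2 : b = d0 := huniq b ⟨hb, Or.inl rfl⟩
    exact G.ne_of_adj hab (h1.trans h2.symm)
  have lemB : ∀ a b u, a ∈ D → b ∈ D → a ≠ b → G.Adj a u → G.Adj b u → False := by
    intro a b u ha hb hne hau hbu
    obtain ⟨d0, _, huniq⟩ := hD u
    exact hne ((huniq a ⟨ha, Or.inr hau⟩).trans (huniq b ⟨hb, Or.inr hbu⟩).symm)
  have hvw : v ≠ w := fun h => by rw [← h] at hdist; simp [SimpleGraph.dist_self] at hdist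
  -- x1 ∉ D, x3 ∉ D
  have hx1D : x1 ∉ D := fun h => lemA v x1 hv h a01
  have hx3D : x3 ∉ D := fun h => lemA x3 w h hwD a34
  -- dominator of x2
  obtain ⟨d, ⟨hdD, hdadj⟩, huniq2⟩ := hD x2
  have hdnev : d ≠ v := fun h => by
    rcases hdadj with h2 | h2
    · rw [← h2, h, SimpleGraph.dist_self] at d2; omega
    · exact n02 (h ▸ h2)
  have hdnew : d ≠ w := fun h => by
    rcases hdadj with h2 | h2
    · rw [← h2, h] at d2; omega
    · exact n24 (h ▸ h2).symm
  have hdx2 : G.Adj d x2 := by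
    rcases hdadj with h | h
    · exfalso
      have hadj : G.Adj d x1 := by rw [h]; exact a12.symm
      exact lemB v d x1 hv hdD (Ne.symm hdnev) a01 hadj
    · exact h
  -- d distinct from x1, x3 and nonadjacent to everything except x2
  have hdx1 : d ≠ x1 := fun h => hx1D (h ▸ hdD)
  have hdx3 : d ≠ x3 := fun h => hx3D (h ▸ hdD)
  have ndv : ¬ G.Adj d v := fun h => lemA d v hdD hv h
  have ndw : ¬ G.Adj d w := fun h => lemA d w hdD hwD h
  have ndx1 : ¬ G.Adj d x1 := fun h => lemB v d x1 hv hdD (Ne.symm hdnev) a01 h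
  have ndx3 : ¬ G.Adj d x3 := fun h => lemB w d x3 hwD hdD (Ne.symm hdnew) a34.symm h
  -- distinctness of path vertices
  have h01 : v ≠ x1 := fun h => by rw [← h, SimpleGraph.dist_self] at d1; omega
  have h02 : v ≠ x2 := fun h => by rw [← h, SimpleGraph.dist_self] at d2; omega
  have h03 : v ≠ x3 := fun h => by rw [← h, SimpleGraph.dist_self] at d3; omega
  have h12 : x1 ≠ x2 := fun h => by rw [h] at d1; omega
  have h13 : x1 ≠ x3 := fun h => by rw [h] at d1; omega
  have h14 : x1 ≠ w := fun h => by rw [h] at d1; omega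
  have h23 : x2 ≠ x3 := fun h => by rw [h] at d2; omega
  have h24 : x2 ≠ w := fun h => by rw [h] at d2; omega
  have h34 : x3 ≠ w := fun h => by rw [h] at d3; omega
  have hdx2' : d ≠ x2 := G.ne_of_adj hdx2
  -- build the embedding
  let f : Fin 6 → V := ![v, x1, x2, x3, w, d]
  have hmap : ∀ i j : Fin 6, G.Adj (f i) (f j) ↔ S122.Adj i j := by
    intro i j
    fin_cases i <;> fin_cases j <;>
      first
        | exact iff_of_true (by assumption) (by decide)
        | exact iff_of_true (G.adj_symm (by assumption)) (by decide)
        | exact iff_of_false (by assumption) (by decide)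
        | exact iff_of_false (fun h => (by assumption : ¬ G.Adj _ _) (G.adj_symm h)) (by decide)
        | exact iff_of_false (G.loopless.irrefl _) (by decide)
  have hinj : Function.Injective f := by
    intro i j hij
    fin_cases i <;> fin_cases j <;>
      first
        | rfl
        | exact absurd hij (by assumption)
        | exact absurd hij.symm (by assumption)
        | exact absurd (G.ne_of_adj (by assumption)) (fun h => h hij)
        | exact absurd (G.ne_of_adj (by assumption)) (fun h => h hij.symm)
  exact hSfree.elim ⟨⟨f, hinj⟩, fun {i j} => hmap i j⟩
end

section
/- Let G be a connected {P₆, S₁,₂,₂}-free graph with efficient dominating set D, v ∈ D, and distance levels Nᵢ. If x ∈ N₂ is adjacent to d ∈ D ∩ N₃, then N(x) ∩ N₃ ⊆ N(d) ∩ N₃ ∪ {d}. -/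
open SimpleGraph

theorem stmt12 {V : Type*} [Fintype V] (G : SimpleGraph V) (hG : G.Connected)
    (hP6free : IsEmpty (SimpleGraph.pathGraph 6 ↪g G))
    (hSfree : IsEmpty (S122 ↪g G))
    (D : Set V) (hD : IsEffDomSet G D) (v : V) (hv : v ∈ D)
    (x d : V) (hx : G.dist v x = 2) (hdD : d ∈ D) (hd3 : G.dist v d = 3)
    (hxd : G.Adj x d) :
    ∀ r, G.Adj x r → G.dist v r = 3 → (G.Adj d r ∨ r = d) := by
  intro r hxr hr3
  by_contra hcon
  push_neg at hcon
  obtain ⟨hdr, hrd⟩ := hcon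
  -- helper: adjacency gives dist ≤ 1
  have adj_dist : ∀ a b : V, G.Adj a b → G.dist a b ≤ 1 := by
    intro a b hab
    simpa using G.dist_le (Walk.cons hab Walk.nil)
  have step : ∀ a b : V, G.Adj a b → G.dist v b ≤ G.dist v a + 1 := by
    intro a b hab
    calc G.dist v b ≤ G.dist v a + G.dist a b := hG.dist_triangle
    _ ≤ G.dist v a + 1 := by have := adj_dist a b hab; omega
  -- uniqueness of dominators
  have uniq : ∀ u a b : V, a ∈ D → (a = u ∨ G.Adj a u) → b ∈ D → (b = u ∨ G.Adj b u) → a = b := by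
    intro u a b ha1 ha2 hb1 hb2
    obtain ⟨c, _, hc⟩ := hD u
    rw [hc a ⟨ha1, ha2⟩, hc b ⟨hb1, hb2⟩]
  -- obtain y with v ~ y ~ x
  have hdvx : G.dist v x ≠ 0 := by omega
  obtain ⟨p, hp⟩ := SimpleGraph.exists_walk_of_dist_ne_zero hdvx
  rw [hx] at hp
  obtain ⟨y, hvy, hyx⟩ : ∃ y, G.Adj v y ∧ G.Adj y x := by
    cases p with
    | nil => simp at hp
    | cons h q =>
      cases q with
      | nil => simp at hp
      | cons h2 q2 =>
        cases q2 with
        | nil => exact ⟨_, h, h2⟩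
        | cons h3 q3 => simp only [Walk.length_cons] at hp; omega
  have hdvy : G.dist v y ≤ 1 := adj_dist v y hvy
  -- basic nonadjacencies from distance
  have hnvx : ¬ G.Adj v x := fun h => by have := adj_dist v x h; omega
  have hnvr : ¬ G.Adj v r := fun h => by have := adj_dist v r h; omega
  have hnvd : ¬ G.Adj v d := fun h => by have := adj_dist v d h; omega
  have hnyr : ¬ G.Adj y r := fun h => by have := step y r h; omega
  have hnyd : ¬ G.Adj y d := fun h => by have := step y d h; omega
  -- x ∉ D (its unique dominator is d)
  have hxnD : x ∉ D := by
    intro hxD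
    have := uniq x d x hdD (Or.inr hxd.symm) hxD (Or.inl rfl)
    exact hxd.ne this.symm
  -- dominator of r
  obtain ⟨d', ⟨hd'D, hd'r⟩, _⟩ := hD r
  have hd'r : G.Adj d' r := by
    rcases hd'r with h | h
    · exfalso
      subst h
      have := uniq x d d' hdD (Or.inr hxd.symm) hd'D (Or.inr hxr.symm)
      exact hrd this.symm
    · exact h
  -- d' is not v
  have hd'v : d' ≠ v := by
    intro h; subst h; exact hnvr hd'r
  have hnvd' : ¬ G.Adj v d' := by
    intro h
    exact hd'v (uniq v d' v hd'D (Or.inr h.symm) hv (Or.inl rfl))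
  have hnyd' : ¬ G.Adj y d' := by
    intro h
    have := uniq y v d' hv (Or.inr hvy) hd'D (Or.inr h.symm)
    exact hd'v this.symm
  have hnxd' : ¬ G.Adj x d' := by
    intro h
    have := uniq x d d' hdD (Or.inr hxd.symm) hd'D (Or.inr h.symm)
    subst this
    exact hdr hd'r
  have hdd' : d ≠ d' := by
    intro h; subst h; exact hdr hd'r
  have hndd' : ¬ G.Adj d d' := by
    intro h
    exact hdd' (uniq d d d' hdD (Or.inl rfl) hd'D (Or.inr h.symm))
  -- distinctness
  have h1 : v ≠ y := hvy.ne
  have h2 : v ≠ x := by intro h; subst h; rw [SimpleGraph.dist_self] at hx; omega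
  have h3 : v ≠ r := by intro h; subst h; rw [SimpleGraph.dist_self] at hr3; omega
  have h4 : v ≠ d' := hd'v.symm
  have h5 : v ≠ d := by intro h; subst h; rw [SimpleGraph.dist_self] at hd3; omega
  have h6 : y ≠ x := hyx.ne
  have h7 : y ≠ r := by intro h; subst h; omega
  have h8 : y ≠ d' := by intro h; subst h; exact hnyr (by exact hd'r)
  have h9 : y ≠ d := by intro h; subst h; omega
  have h10 : x ≠ r := by intro h; subst h; omega
  have h11 : x ≠ d' := by
    intro h; exact hxnD (h ▸ hd'D)
  have h12 : x ≠ d := hxd.ne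
  have h13 : r ≠ d' := hd'r.ne'
  have h14 : r ≠ d := hrd
  have h15 : d' ≠ d := hdd'.symm
  -- build the S122 embedding
  have h1' := h1.symm; have h2' := h2.symm; have h3' := h3.symm; have h4' := h4.symm
  have h5' := h5.symm; have h6' := h6.symm; have h7' := h7.symm; have h8' := h8.symm
  have h9' := h9.symm; have h10' := h10.symm; have h11' := h11.symm; have h12' := h12.symm
  have h13' := h13.symm; have h14' := h14.symm; have h15' := h15.symm
  have hinj : Function.Injective (![v, y, x, r, d', d] : Fin 6 → V) := by
    intro a b h
    fin_cases a <;> fin_cases b <;> simp at h ⊢ <;> exact absurd h (by assumption)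
  have hmap : ∀ a b : Fin 6, G.Adj ((![v, y, x, r, d', d] : Fin 6 → V) a) ((![v, y, x, r, d', d] : Fin 6 → V) b) ↔ S122.Adj a b := by
    have hvy' := hvy.symm
    have hyx' := hyx.symm
    have hxr' := hxr.symm
    have hd'r' := hd'r.symm
    have hxd' := hxd.symm
    have n1 : ¬ G.Adj x v := fun h => hnvx h.symm
    have n2 : ¬ G.Adj r v := fun h => hnvr h.symm
    have n3 : ¬ G.Adj d v := fun h => hnvd h.symm
    have n4 : ¬ G.Adj d' v := fun h => hnvd' h.symm
    have n5 : ¬ G.Adj r y := fun h => hnyr h.symm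
    have n6 : ¬ G.Adj d y := fun h => hnyd h.symm
    have n7 : ¬ G.Adj d' y := fun h => hnyd' h.symm
    have n8 : ¬ G.Adj d' x := fun h => hnxd' h.symm
    have n9 : ¬ G.Adj r d := fun h => hdr h.symm
    have n10 : ¬ G.Adj d' d := fun h => hndd' h.symm
    intro a b
    fin_cases a <;> fin_cases b <;>
      simp [S122, Sym2.eq, Sym2.rel_iff', Prod.ext_iff] <;>
      first
        | exact G.loopless _
        | assumption
  exact hSfree.elim ⟨⟨_, hinj⟩, hmap _ _⟩
end

section
/- Let G = (V,E) be a cograph (P₄-free graph). Then D ⊆ V is an efficient dominating set of G if and only if D consists of exactly one universal vertex of each connected component of G, where a universal vertex of a component is a vertex adjacent to all other vertices of that component. -/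
open SimpleGraph

lemma key14 {V : Type*} (G : SimpleGraph V)
    (hcograph : IsEmpty (SimpleGraph.pathGraph 4 ↪g G))
    (D : Set V) (heff : IsEffDomSet G D) {d : V} (hd : d ∈ D) :
    ∀ w, G.Reachable w d → d = w ∨ G.Adj d w := by
  have uniqAt : ∀ z a b, (a ∈ D ∧ (a = z ∨ G.Adj a z)) →
      (b ∈ D ∧ (b = z ∨ G.Adj b z)) → a = b := by
    intro z a b ha hb
    obtain ⟨e, -, hu⟩ := heff z
    rw [hu a ha, hu b hb]
  suffices h : ∀ (x w : V) (p : G.Walk w x), x ∈ D → x = w ∨ G.Adj x w by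
    intro w hw; obtain ⟨p⟩ := hw; exact h d w p hd
  intro x w p
  induction p with
  | nil => intro _; left; rfl
  | @cons u v x h q ih =>
    intro hx
    rcases ih hx with hdv | hdv
    · subst hdv; right; exact h.symm
    · by_cases hne : x = u
      · left; exact hne
      by_cases hnadj : G.Adj x u
      · right; exact hnadj
      exfalso
      obtain ⟨d', ⟨hd'D, hd'dom⟩, -⟩ := heff u
      rcases hd'dom with rfl | hd'u
      · exact hne (uniqAt v x d' ⟨hx, Or.inr hdv⟩ ⟨hd'D, Or.inr h⟩)
      · by_cases hdd' : d' = x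
        · exact hnadj (hdd' ▸ hd'u)
        by_cases hd'v : G.Adj d' v
        · exact hnadj ((uniqAt v x d' ⟨hx, Or.inr hdv⟩ ⟨hd'D, Or.inr hd'v⟩) ▸ hd'u)
        by_cases hd'd : G.Adj d' x
        · exact hnadj ((uniqAt x x d' ⟨hx, Or.inl rfl⟩ ⟨hd'D, Or.inr hd'd⟩) ▸ hd'u)
        -- build P4 : x - v - u - d'
        have hvd' : v ≠ d' := by
          rintro rfl; exact hd'd hdv.symm
        have hdne_v : x ≠ v := hdv.ne
        have hvu : v ≠ u := h.ne'
        have hud' : u ≠ d' := hd'u.ne'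
        have hdd'' : x ≠ d' := fun e => hdd' e.symm
        have hdu : x ≠ u := hne
        let f : Fin 4 → V := ![x, v, u, d']
        have hinj : Function.Injective f := by
          intro a b hab
          fin_cases a <;> fin_cases b <;>
            simp_all [f, hdne_v, hvu, hud', hdd'', hdu, hvd']
        refine hcograph.elim ⟨⟨f, hinj⟩, ?_⟩
        intro a b
        have hvu' : G.Adj v u := h.symm
        have hud'' : G.Adj u d' := hd'u.symm
        have hnd'v : ¬ G.Adj v d' := fun e => hd'v e.symm
        have hndu : ¬ G.Adj u x := fun e => hnadj e.symm
        have hndd' : ¬ G.Adj x d' := fun e => hd'd e.symm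
        fin_cases a <;> fin_cases b <;>
          simp [f, pathGraph_adj, hdv, hvu', hud'', hdv.symm, hvu'.symm, hud''.symm,
            hnadj, hd'v, hd'd, hnd'v, hndu, hndd'] <;> decide

theorem stmt14 {V : Type*} [Fintype V] (G : SimpleGraph V)
    (hcograph : IsEmpty (SimpleGraph.pathGraph 4 ↪g G))
    (D : Set V) :
    IsEffDomSet G D ↔
      ((∀ d ∈ D, ∀ w : V,
          G.connectedComponentMk w = G.connectedComponentMk d → w ≠ d → G.Adj d w) ∧
       (∀ u : V, ∃! d : V, d ∈ D ∧
          G.connectedComponentMk d = G.connectedComponentMk u)) := by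
  constructor
  · intro heff
    have hP1 : ∀ d ∈ D, ∀ w : V,
        G.connectedComponentMk w = G.connectedComponentMk d → w ≠ d → G.Adj d w := by
      intro d hd w hcomp hne
      have hr : G.Reachable w d := (SimpleGraph.ConnectedComponent.eq).mp hcomp
      rcases key14 G hcograph D heff hd w hr with h | h
      · exact absurd h.symm hne
      · exact h
    refine ⟨hP1, ?_⟩
    intro u
    obtain ⟨d, ⟨hdD, hdom⟩, huniq⟩ := heff u
    have hcomp : G.connectedComponentMk d = G.connectedComponentMk u := by
      rcases hdom with rfl | h
      · rfl
      · exact SimpleGraph.ConnectedComponent.sound h.reachable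
    refine ⟨d, ⟨hdD, hcomp⟩, ?_⟩
    intro d' ⟨hd'D, hcomp'⟩
    by_cases hne : d' = d
    · exact hne
    · have hcc : G.connectedComponentMk d' = G.connectedComponentMk d := hcomp'.trans hcomp.symm
      have hadj : G.Adj d d' := hP1 d hdD d' hcc hne
      obtain ⟨e, -, hu⟩ := heff d
      rw [hu d' ⟨hd'D, Or.inr hadj.symm⟩, hu d ⟨hdD, Or.inl rfl⟩]
  · intro ⟨huniv, hexist⟩ u
    obtain ⟨d, ⟨hdD, hdcomp⟩, huniq⟩ := hexist u
    refine ⟨d, ⟨hdD, ?_⟩, ?_⟩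
    · by_cases hne : u = d
      · exact Or.inl hne.symm
      · exact Or.inr (huniv d hdD u hdcomp.symm hne)
    · intro d' ⟨hd'D, hdom'⟩
      have : G.connectedComponentMk d' = G.connectedComponentMk u := by
        rcases hdom' with rfl | h
        · rfl
        · exact SimpleGraph.ConnectedComponent.sound h.reachable
      exact huniq d' ⟨hd'D, this⟩
end
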